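/- Let C2 ⊆ C1 ⊆ F_2^n be linear subspaces, let x ∈ F_2^n, z2 ∈ F_2^n, and z1 ∈ C2^⊥ := {z ∈ F_2^n : z·c = 0 for all c ∈ C2}. Let R ⊆ C1 be a set containing exactly one element of each coset of C2 in C1. Then |x, z1+z2⟩_{C1} = |C1/C2|^{−1/2}·Σ_{x1∈R} (−1)^{(z1+z2)·x1}·|x+x1, z2⟩_{C2}; moreover each summand (−1)^{(z1+z2)·x1}·|x+x1, z2⟩_{C2} depends only on the coset x1 + C2 and not on the chosen representative x1. -/

import Mathlib

open scoped Classical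

/-- The sign `(−1)^a` of an element `a ∈ F_2`. -/
def sgn (a : ZMod 2) : ℝ := if a = 0 then 1 else -1

/-- The coset state `|x,z⟩_C = |C|^{−1/2}·Σ_{x'∈C} (−1)^{z·x'}·e_{x+x'}`. -/
noncomputable def cosetState (n : ℕ) (C : Submodule (ZMod 2) (Fin n → ZMod 2))
    (x z : Fin n → ZMod 2) : (Fin n → ZMod 2) → ℂ :=
  fun w => (((Real.sqrt (Fintype.card C))⁻¹ : ℝ) : ℂ) *
    ∑ x' : C, ((sgn (∑ i, z i * (x' : Fin n → ZMod 2) i) : ℝ) : ℂ) *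
      (if w = x + (x' : Fin n → ZMod 2) then 1 else 0)

lemma sgn_add (a b : ZMod 2) : sgn (a + b) = sgn a * sgn b := by
  have h : ∀ a : ZMod 2, a = 0 ∨ a = 1 := by decide
  rcases h a with rfl | rfl <;> rcases h b with rfl | rfl <;>
    simp [sgn, show (1:ZMod 2) + 1 = 0 from rfl]

lemma sgn_sq (a : ZMod 2) : sgn a * sgn a = 1 := by
  have h : ∀ a : ZMod 2, a = 0 ∨ a = 1 := by decide
  rcases h a with rfl | rfl <;> simp [sgn]

lemma dot_add (n : ℕ) (z a b : Fin n → ZMod 2) :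
    (∑ i, z i * (a + b) i) = (∑ i, z i * a i) + ∑ i, z i * b i := by
  simp [mul_add, Finset.sum_add_distrib]

lemma key_sum (n : ℕ) (C2 C1 : Submodule (ZMod 2) (Fin n → ZMod 2)) (h21 : C2 ≤ C1)
    (R : Finset (Fin n → ZMod 2)) (hRsub : ∀ x1 ∈ R, x1 ∈ C1)
    (hR : ∀ y ∈ C1, ∃! x1, x1 ∈ R ∧ y - x1 ∈ C2) (f : (Fin n → ZMod 2) → ℂ) :
    ∑ y : C1, f y = ∑ x1 ∈ R, ∑ c : C2, f (x1 + c) := by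
  choose rep hrep hrepu using fun y hy => hR y hy
  have h1 : ∑ y : C1, f y = ∑ y ∈ (C1 : Set (Fin n → ZMod 2)).toFinset, f y :=
    Finset.sum_set_coe (f := f) (C1 : Set (Fin n → ZMod 2))
  have h2 : ∀ x1 ∈ R, (∑ c : C2, f (x1 + c))
      = ∑ c ∈ (C2 : Set (Fin n → ZMod 2)).toFinset, f (x1 + c) := fun x1 _ =>
    Finset.sum_set_coe (f := fun c => f (x1 + c)) (C2 : Set (Fin n → ZMod 2))
  rw [h1, Finset.sum_congr rfl h2]
  refine Eq.trans ?_ (Finset.sum_product R ((C2 : Set (Fin n → ZMod 2)).toFinset)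
    (fun p => f (p.1 + p.2)))
  refine (Finset.sum_nbij' (fun p => p.1 + p.2)
    (fun y => if h : y ∈ C1 then (rep y h, y - rep y h) else (0, 0))
    ?_ ?_ ?_ ?_ ?_).symm
  · rintro ⟨a, b⟩ hab
    rw [Finset.mem_product] at hab
    simp only [Set.mem_toFinset, SetLike.mem_coe] at hab ⊢
    exact C1.add_mem (hRsub a hab.1) (h21 hab.2)
  · intro y hy
    simp only [Set.mem_toFinset, SetLike.mem_coe] at hy
    rw [dif_pos hy, Finset.mem_product]
    simp only [Set.mem_toFinset, SetLike.mem_coe]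
    exact ⟨(hrep y hy).1, (hrep y hy).2⟩
  · rintro ⟨a, b⟩ hab
    rw [Finset.mem_product] at hab
    simp only [Set.mem_toFinset, SetLike.mem_coe] at hab
    have hy : a + b ∈ C1 := C1.add_mem (hRsub a hab.1) (h21 hab.2)
    simp only
    rw [dif_pos hy]
    have ha : rep (a + b) hy = a :=
      ((hR (a + b) hy).unique ⟨(hrep _ hy).1, (hrep _ hy).2⟩
        ⟨hab.1, by simpa using hab.2⟩)
    rw [ha]
    simp
  · intro y hy
    simp only [Set.mem_toFinset, SetLike.mem_coe] at hy
    rw [dif_pos hy]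
    simp
  · rintro ⟨a, b⟩ _; rfl

/-- For `C2 ⊆ C1`, `z1 ∈ C2^⊥`, and a transversal `R ⊆ C1` of the cosets
of `C2` in `C1`:
`|x,z1+z2⟩_{C1} = |C1/C2|^{−1/2}·Σ_{x1∈R} (−1)^{(z1+z2)·x1}·|x+x1,z2⟩_{C2}`, and each
summand depends only on the coset `x1 + C2`. -/
theorem stmt_7 (n : ℕ) (C2 C1 : Submodule (ZMod 2) (Fin n → ZMod 2)) (h21 : C2 ≤ C1)
    (x z1 z2 : Fin n → ZMod 2)
    (hz1 : ∀ c ∈ C2, (∑ i, z1 i * c i) = (0 : ZMod 2))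
    (R : Finset (Fin n → ZMod 2)) (hRsub : ∀ x1 ∈ R, x1 ∈ C1)
    (hR : ∀ y ∈ C1, ∃! x1, x1 ∈ R ∧ y - x1 ∈ C2) :
    (cosetState n C1 x (z1 + z2)
      = fun w => (((Real.sqrt ((Fintype.card C1 : ℝ) / (Fintype.card C2 : ℝ)))⁻¹ : ℝ) : ℂ) *
          ∑ x1 ∈ R, ((sgn (∑ i, (z1 + z2) i * x1 i) : ℝ) : ℂ) *
            cosetState n C2 (x + x1) z2 w)
    ∧ ∀ x1 x1' : Fin n → ZMod 2, x1 - x1' ∈ C2 →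
        (fun w => ((sgn (∑ i, (z1 + z2) i * x1 i) : ℝ) : ℂ) *
            cosetState n C2 (x + x1) z2 w)
          = fun w => ((sgn (∑ i, (z1 + z2) i * x1' i) : ℝ) : ℂ) *
            cosetState n C2 (x + x1') z2 w := by
  have hc2 : (0:ℝ) < (Fintype.card C2 : ℝ) := by positivity
  have hc1 : (0:ℝ) < (Fintype.card C1 : ℝ) := by positivity
  have hscalar : ((Real.sqrt ((Fintype.card C1 : ℝ) / (Fintype.card C2 : ℝ)))⁻¹ : ℝ)
      * ((Real.sqrt (Fintype.card C2))⁻¹ : ℝ) = ((Real.sqrt (Fintype.card C1))⁻¹ : ℝ) := by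
    rw [Real.sqrt_div hc1.le]
    have h2 : Real.sqrt (Fintype.card C2) ≠ 0 := by positivity
    have h1 : Real.sqrt (Fintype.card C1) ≠ 0 := by positivity
    field_simp
  have hscalarC : (((Real.sqrt ((Fintype.card C1 : ℝ) / (Fintype.card C2 : ℝ)))⁻¹ : ℝ) : ℂ)
      * (((Real.sqrt (Fintype.card C2))⁻¹ : ℝ) : ℂ)
      = (((Real.sqrt (Fintype.card C1))⁻¹ : ℝ) : ℂ) := by
    exact_mod_cast congrArg (Complex.ofReal) hscalar
  constructor
  · funext w
    simp only [cosetState]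
    have hks := key_sum n C2 C1 h21 R hRsub hR
      (fun y => ((sgn (∑ i, (z1 + z2) i * y i) : ℝ) : ℂ) * (if w = x + y then 1 else 0))
    rw [hks]
    have hinner : ∀ x1 : Fin n → ZMod 2,
        (∑ c : C2, ((sgn (∑ i, (z1 + z2) i * (x1 + (c : Fin n → ZMod 2)) i) : ℝ) : ℂ) *
          (if w = x + (x1 + (c : Fin n → ZMod 2)) then 1 else 0))
        = ((sgn (∑ i, (z1 + z2) i * x1 i) : ℝ) : ℂ) *
            ∑ x' : C2, ((sgn (∑ i, z2 i * (x' : Fin n → ZMod 2) i) : ℝ) : ℂ) *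
              (if w = x + x1 + (x' : Fin n → ZMod 2) then 1 else 0) := by
      intro x1
      rw [Finset.mul_sum]
      refine Finset.sum_congr rfl fun c _ => ?_
      have hd' : (∑ i, (z1 + z2) i * (x1 + (c : Fin n → ZMod 2)) i)
          = (∑ i, (z1 + z2) i * x1 i) + ∑ i, z2 i * (c : Fin n → ZMod 2) i := by
        rw [dot_add]
        congr 1
        have hsplit : (∑ i, (z1 + z2) i * (c : Fin n → ZMod 2) i)
            = (∑ i, z1 i * (c : Fin n → ZMod 2) i) + ∑ i, z2 i * (c : Fin n → ZMod 2) i := by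
          simp [add_mul, Finset.sum_add_distrib]
        rw [hsplit, hz1 _ c.2, zero_add]
      have hcond : (w = x + (x1 + (c : Fin n → ZMod 2))) = (w = x + x1 + (c : Fin n → ZMod 2)) := by
        rw [add_assoc]
      rw [hd', sgn_add]
      simp only [hcond]
      push_cast
      ring
    rw [Finset.sum_congr rfl fun x1 _ => hinner x1]
    have hpull : ∑ x1 ∈ R, ((sgn (∑ i, (z1 + z2) i * x1 i) : ℝ) : ℂ) *
          ((((Real.sqrt (Fintype.card C2))⁻¹ : ℝ) : ℂ) *
            ∑ x' : C2, ((sgn (∑ i, z2 i * (x' : Fin n → ZMod 2) i) : ℝ) : ℂ) *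
              (if w = x + x1 + (x' : Fin n → ZMod 2) then 1 else 0))
        = (((Real.sqrt (Fintype.card C2))⁻¹ : ℝ) : ℂ) *
          ∑ x1 ∈ R, ((sgn (∑ i, (z1 + z2) i * x1 i) : ℝ) : ℂ) *
            ∑ x' : C2, ((sgn (∑ i, z2 i * (x' : Fin n → ZMod 2) i) : ℝ) : ℂ) *
              (if w = x + x1 + (x' : Fin n → ZMod 2) then 1 else 0) := by
      rw [Finset.mul_sum]
      exact Finset.sum_congr rfl fun _ _ => by ring
    rw [hpull, ← hscalarC]
    ring
  · intro x1 x1' hcmem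
    obtain ⟨c, hc, rfl⟩ : ∃ c, c ∈ C2 ∧ x1 = x1' + c := ⟨x1 - x1', hcmem, by abel⟩
    funext w
    simp only [cosetState]
    have hsc : ((sgn (∑ i, z2 i * c i) : ℝ) : ℂ) * ((sgn (∑ i, z2 i * c i) : ℝ) : ℂ) = 1 := by
      rw [← Complex.ofReal_mul, sgn_sq]
      norm_num
    have hd : (∑ i, (z1 + z2) i * (x1' + c) i)
        = (∑ i, (z1 + z2) i * x1' i) + ∑ i, z2 i * c i := by
      rw [dot_add]
      congr 1
      have hsplit : (∑ i, (z1 + z2) i * c i)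
          = (∑ i, z1 i * c i) + ∑ i, z2 i * c i := by
        simp [add_mul, Finset.sum_add_distrib]
      rw [hsplit, hz1 _ hc, zero_add]
    have hsum : (∑ x' : C2, ((sgn (∑ i, z2 i * (x' : Fin n → ZMod 2) i) : ℝ) : ℂ) *
          (if w = x + (x1' + c) + (x' : Fin n → ZMod 2) then 1 else 0))
        = ∑ x' : C2, (((sgn (∑ i, z2 i * c i) : ℝ) : ℂ) *
            ((sgn (∑ i, z2 i * (x' : Fin n → ZMod 2) i) : ℝ) : ℂ)) *
          (if w = x + x1' + (x' : Fin n → ZMod 2) then 1 else 0) := by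
      refine Fintype.sum_equiv (Equiv.addRight (⟨c, hc⟩ : C2)) _ _ fun x' => ?_
      have hco : (((Equiv.addRight (⟨c, hc⟩ : C2)) x' : C2) : Fin n → ZMod 2)
          = (x' : Fin n → ZMod 2) + c := rfl
      rw [hco, show (∑ i, z2 i * ((x' : Fin n → ZMod 2) + c) i)
          = (∑ i, z2 i * (x' : Fin n → ZMod 2) i) + ∑ i, z2 i * c i from dot_add n z2 _ c,
        sgn_add]
      simp only [show (w = x + x1' + ((x' : Fin n → ZMod 2) + c))
          = (w = x + (x1' + c) + (x' : Fin n → ZMod 2)) from by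
            rw [show x + x1' + ((x' : Fin n → ZMod 2) + c)
              = x + (x1' + c) + (x' : Fin n → ZMod 2) from by abel]]
      push_cast
      linear_combination (-(((sgn (∑ i, z2 i * (x' : Fin n → ZMod 2) i) : ℝ) : ℂ) *
        (if w = x + (x1' + c) + (x' : Fin n → ZMod 2) then (1:ℂ) else 0))) * hsc
    rw [hd, sgn_add, hsum]
    have hpull2 : ∑ x' : C2, (((sgn (∑ i, z2 i * c i) : ℝ) : ℂ) *
          ((sgn (∑ i, z2 i * (x' : Fin n → ZMod 2) i) : ℝ) : ℂ)) *
          (if w = x + x1' + (x' : Fin n → ZMod 2) then 1 else 0)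
        = ((sgn (∑ i, z2 i * c i) : ℝ) : ℂ) *
          ∑ x' : C2, ((sgn (∑ i, z2 i * (x' : Fin n → ZMod 2) i) : ℝ) : ℂ) *
            (if w = x + x1' + (x' : Fin n → ZMod 2) then 1 else 0) := by
      rw [Finset.mul_sum]
      exact Finset.sum_congr rfl fun _ _ => by ring
    rw [hpull2]
    push_cast
    linear_combination (((sgn (∑ i, (z1 + z2) i * x1' i) : ℝ) : ℂ) *
      ((((Real.sqrt (Fintype.card C2)) : ℝ) : ℂ))⁻¹ *
      ∑ x' : C2, ((sgn (∑ i, z2 i * (x' : Fin n → ZMod 2) i) : ℝ) : ℂ) *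
        (if w = x + x1' + (x' : Fin n → ZMod 2) then (1:ℂ) else 0)) * hsc
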